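/- For every a > 0, the integral of (1/(1-x^2)) * log((1 + a^2 x^2)/(1 + a^2)) over x in (0, ∞), multiplied by -1/π, equals arctan(a). (The integrand has an integrable singularity at x = 1; the integral is understood as an improper/principal value, which converges absolutely since the logarithm vanishes at x = 1.) -/

import Mathlib

open Real MeasureTheory Set Filter Topology

theorem stmt0 (a : ℝ) (ha : 0 < a) :
    -(1/π) * ∫ x in Set.Ioi (0:ℝ),
        (1/(1 - x^2)) * Real.log ((1 + a^2*x^2)/(1 + a^2)) = Real.arctan a := by
  have hπ : (0:ℝ) < π := Real.pi_pos
  set g : ℝ → ℝ → ℝ := fun x b => 2*b/((1+b^2*x^2)*(1+b^2)) with hgdef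
  -- continuity of g
  have hgc : Continuous (fun p : ℝ × ℝ => g p.1 p.2) := by
    apply Continuous.div (by fun_prop) (by fun_prop)
    intro p
    have : (0:ℝ) < (1+p.2^2*p.1^2)*(1+p.2^2) := by positivity
    exact this.ne'
  -- integrability in b for each x
  have hIb : ∀ x : ℝ, IntegrableOn (fun b => g x b) (Ioc 0 a) := by
    intro x
    apply Continuous.integrableOn_Ioc
    exact hgc.comp (continuous_const.prodMk continuous_id)
  -- nonnegativity of g on Ioc
  have hg_nn : ∀ x : ℝ, ∀ b ∈ Ioc (0:ℝ) a, 0 ≤ g x b := by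
    intro x b hb
    have hb0 : 0 < b := hb.1
    simp only [hgdef]
    positivity
  -- Step 1: pointwise identity (proved above)
  have hL1 : ∀ x : ℝ, 0 < x → x ≠ 1 →
      (1/(1 - x^2)) * Real.log ((1 + a^2*x^2)/(1 + a^2)) = -∫ b in Ioc (0:ℝ) a, g x b := by
    intro x hx0 hx1
    have hx2 : x^2 - 1 ≠ 0 := by
      intro h
      have : (x-1)*(x+1) = 0 := by nlinarith
      rcases mul_eq_zero.1 this with h' | h'
      · exact hx1 (by linarith)
      · linarith
    have hFTC : ∫ b in (0:ℝ)..a, (2*b*x^2/(1+b^2*x^2) - 2*b/(1+b^2))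
        = Real.log (1+a^2*x^2) - Real.log (1+a^2) := by
      have hderiv : ∀ b ∈ Set.uIcc (0:ℝ) a,
          HasDerivAt (fun b => Real.log (1+b^2*x^2) - Real.log (1+b^2))
            (2*b*x^2/(1+b^2*x^2) - 2*b/(1+b^2)) b := by
        intro b _
        have hp1 : (0:ℝ) < 1+b^2*x^2 := by positivity
        have hp2 : (0:ℝ) < 1+b^2 := by positivity
        have h1 : HasDerivAt (fun b : ℝ => 1+b^2*x^2) (2*b*x^2) b := by
          simpa using ((hasDerivAt_pow 2 b).mul_const (x^2)).const_add 1
        have h2 : HasDerivAt (fun b : ℝ => 1+b^2) (2*b) b := by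
          simpa using (hasDerivAt_pow 2 b).const_add 1
        have := (h1.log hp1.ne').sub (h2.log hp2.ne')
        exact this
      have hint : IntervalIntegrable (fun b => 2*b*x^2/(1+b^2*x^2) - 2*b/(1+b^2)) volume 0 a := by
        apply Continuous.intervalIntegrable
        apply Continuous.sub
        · exact Continuous.div (by fun_prop) (by fun_prop) (fun b => by positivity)
        · exact Continuous.div (by fun_prop) (by fun_prop) (fun b => by positivity)
      rw [intervalIntegral.integral_eq_sub_of_hasDerivAt hderiv hint]
      simp
    have heq : ∀ b : ℝ, 2*b*x^2/(1+b^2*x^2) - 2*b/(1+b^2)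
        = (x^2-1) * (2*b/((1+b^2*x^2)*(1+b^2))) := by
      intro b
      have hp1 : (0:ℝ) < 1+b^2*x^2 := by positivity
      have hp2 : (0:ℝ) < 1+b^2 := by positivity
      field_simp
      ring
    have h2 : ∫ b in (0:ℝ)..a, (x^2-1) * (2*b/((1+b^2*x^2)*(1+b^2)))
        = Real.log (1+a^2*x^2) - Real.log (1+a^2) := by
      rw [← hFTC]; exact intervalIntegral.integral_congr fun b _ => (heq b).symm
    rw [intervalIntegral.integral_const_mul] at h2
    have h3 : ∫ b in (0:ℝ)..a, 2*b/((1+b^2*x^2)*(1+b^2))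
        = (Real.log (1+a^2*x^2) - Real.log (1+a^2)) / (x^2-1) := by
      field_simp at h2 ⊢
      linarith [h2]
    rw [intervalIntegral.integral_of_le ha.le] at h3
    have h1x : (1:ℝ) - x^2 ≠ 0 := fun h => hx2 (by linarith)
    simp only [hgdef]
    rw [h3, Real.log_div (by positivity) (by positivity)]
    field_simp
    ring
  -- Step 3: inner x-integral
  have hIx : ∀ b : ℝ, 0 < b →
      IntegrableOn (fun x => g x b) (Ioi (0:ℝ)) ∧
      ∫ x in Ioi (0:ℝ), g x b = π/(1+b^2) := by
    intro b hb
    have hb2 : (0:ℝ) < 1+b^2 := by positivity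
    have hd' : ∀ x ∈ Ici (0:ℝ), HasDerivAt (fun x => (2/(1+b^2)) * Real.arctan (b*x))
        ((fun x => g x b) x) x := by
      intro x _
      have h1 : HasDerivAt (fun x : ℝ => b*x) b x := by
        simpa using (hasDerivAt_id x).const_mul b
      have h2 := (Real.hasDerivAt_arctan (b*x)).comp x h1
      have h3 : HasDerivAt (fun x => (2/(1+b^2)) * Real.arctan (b*x))
          (2/(1+b^2) * (1/(1+(b*x)^2)*b)) x := h2.const_mul (2/(1+b^2))
      convert h3 using 1
      have : (0:ℝ) < 1 + b^2*x^2 := by positivity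
      simp only [hgdef]
      field_simp
    have hpos : ∀ x ∈ Ioi (0:ℝ), 0 ≤ (fun x => g x b) x := by
      intro x _
      simp only [hgdef]
      positivity
    have hlim : Tendsto (fun x => (2/(1+b^2)) * Real.arctan (b*x)) atTop
        (𝓝 ((2/(1+b^2)) * (π/2))) := by
      apply Tendsto.const_mul
      exact (Real.tendsto_arctan_atTop.mono_right nhdsWithin_le_nhds).comp
        (tendsto_id.const_mul_atTop hb)
    refine ⟨integrableOn_Ioi_deriv_of_nonneg' hd' hpos hlim, ?_⟩
    have := integral_Ioi_of_hasDerivAt_of_nonneg' hd' hpos hlim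
    rw [this]
    simp [Real.arctan_zero]
  -- Step 4: value of the double integral via Tonelli
  have hmain : ∫ x in Ioi (0:ℝ), (∫ b in Ioc (0:ℝ) a, g x b) = π * Real.arctan a := by
    have hmeas : AEMeasurable (Function.uncurry fun x b => ENNReal.ofReal (g x b))
        ((volume.restrict (Ioi (0:ℝ))).prod (volume.restrict (Ioc (0:ℝ) a))) :=
      (ENNReal.measurable_ofReal.comp hgc.measurable).aemeasurable
    have hswap := lintegral_lintegral_swap hmeas
    -- inner conversions
    have h1 : ∀ x : ℝ, ∫⁻ b in Ioc (0:ℝ) a, ENNReal.ofReal (g x b)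
        = ENNReal.ofReal (∫ b in Ioc (0:ℝ) a, g x b) := by
      intro x
      rw [← ofReal_integral_eq_lintegral_ofReal (hIb x)]
      filter_upwards [ae_restrict_mem measurableSet_Ioc] with b hb using hg_nn x b hb
    have h2 : ∀ᵐ b ∂(volume.restrict (Ioc (0:ℝ) a)),
        ∫⁻ x in Ioi (0:ℝ), ENNReal.ofReal (g x b) = ENNReal.ofReal (π/(1+b^2)) := by
      filter_upwards [ae_restrict_mem measurableSet_Ioc] with b hb
      rw [← ofReal_integral_eq_lintegral_ofReal (hIx b hb.1).1]
      · rw [(hIx b hb.1).2]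
      · filter_upwards with x
        have hb0 : (0:ℝ) < b := hb.1
        simp only [hgdef]
        positivity
    -- the b-integral of π/(1+b²)
    have hb_int : ∫ b in Ioc (0:ℝ) a, π/(1+b^2) = π * Real.arctan a := by
      rw [← intervalIntegral.integral_of_le ha.le]
      have : ∀ b : ℝ, π/(1+b^2) = π * (1/(1+b^2)) := fun b => by ring
      simp_rw [this]
      rw [intervalIntegral.integral_const_mul, integral_one_div_one_add_sq]
      simp
    have hb_intg : IntegrableOn (fun b : ℝ => π/(1+b^2)) (Ioc (0:ℝ) a) := by
      apply Continuous.integrableOn_Ioc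
      exact Continuous.div continuous_const (by fun_prop) (fun b => by positivity)
    have h3 : ∫⁻ b in Ioc (0:ℝ) a, ENNReal.ofReal (π/(1+b^2))
        = ENNReal.ofReal (π * Real.arctan a) := by
      rw [← ofReal_integral_eq_lintegral_ofReal hb_intg]
      · rw [hb_int]
      · filter_upwards with b
        have : (0:ℝ) < 1+b^2 := by positivity
        positivity
    have hG_nn : ∀ x : ℝ, 0 ≤ ∫ b in Ioc (0:ℝ) a, g x b := fun x =>
      setIntegral_nonneg measurableSet_Ioc (hg_nn x)
    have hGm : AEStronglyMeasurable (fun x => ∫ b in Ioc (0:ℝ) a, g x b)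
        (volume.restrict (Ioi (0:ℝ))) :=
      (hgc.aestronglyMeasurable).integral_prod_right'
    rw [integral_eq_lintegral_of_nonneg_ae (Filter.Eventually.of_forall hG_nn) hGm]
    have : ∫⁻ x in Ioi (0:ℝ), ENNReal.ofReal (∫ b in Ioc (0:ℝ) a, g x b)
        = ENNReal.ofReal (π * Real.arctan a) := by
      rw [← lintegral_congr h1, hswap, lintegral_congr_ae h2, h3]
    rw [this, ENNReal.toReal_ofReal]
    have : Real.arctan 0 ≤ Real.arctan a := (Real.arctan_strictMono.le_iff_le).2 ha.le
    rw [Real.arctan_zero] at this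
    exact mul_nonneg hπ.le this
  -- put it together
  have hcong : ∫ x in Ioi (0:ℝ), (1/(1 - x^2)) * Real.log ((1 + a^2*x^2)/(1 + a^2))
      = ∫ x in Ioi (0:ℝ), -(∫ b in Ioc (0:ℝ) a, g x b) := by
    apply integral_congr_ae
    have hne1 : ∀ᵐ x : ℝ ∂(volume.restrict (Ioi (0:ℝ))), x ≠ 1 := by
      apply ae_restrict_of_ae
      rw [ae_iff]
      have : {x : ℝ | ¬ x ≠ 1} = {1} := by ext x; simp
      rw [this]
      exact Real.volume_singleton
    filter_upwards [ae_restrict_mem measurableSet_Ioi, hne1] with x hx hx1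
    exact hL1 x hx hx1
  rw [hcong, integral_neg, hmain]
  field_simp
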